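/- For all X in a commutative ring, 4·(X³+1)³ − 27·X⁶ = (4X³+1)·(X³−2)². Consequently, if (X, Y) is a point on the genus 2 curve Y² = (X³+1)(4X³+1) with X³ + 1 ≠ 0, then (U, V) = (X²/(X³+1), Y·(X³−2)/(X³+1)²) satisfies V² = −27U³ + 4. -/

import Mathlib

theorem stmt_10 {R : Type*} [CommRing R] {k : Type*} [Field k] :
    (∀ X : R, 4 * (X ^ 3 + 1) ^ 3 - 27 * X ^ 6
        = (4 * X ^ 3 + 1) * (X ^ 3 - 2) ^ 2) ∧
    (∀ X Y : k, X ^ 3 + 1 ≠ 0 →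
      Y ^ 2 = (X ^ 3 + 1) * (4 * X ^ 3 + 1) →
      (Y * (X ^ 3 - 2) / (X ^ 3 + 1) ^ 2) ^ 2
        = -27 * (X ^ 2 / (X ^ 3 + 1)) ^ 3 + 4) := by
  constructor
  · intro X; ring
  · intro X Y h hY
    field_simp
    linear_combination ((X ^ 3 - 2) ^ 2) * hY
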